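/- In the standard setup for a finite-dimensional Hopf algebra H over ℂ with positive basis B, the following are equivalent for b ∈ B: (1) α₊(b) = e; (2) β₊(b) = e; (3) b ∈ G₋ (that is, ε(b) ≠ 0). In particular, there is no basis element b with α₊(b) = e and β₊(b) = g₊ ≠ e, nor with α₊(b) = g₊ ≠ e and β₊(b) = e. -/

import Mathlib

open scoped TensorProduct ComplexOrder

structure IsPositiveBasis {H : Type*} [Ring H] [HopfAlgebra ℂ H] {ι : Type*}
    (B : Module.Basis ι ℂ H) : Prop where
  one_nonneg : ∀ i, 0 ≤ B.repr 1 i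
  counit_nonneg : ∀ i, 0 ≤ Coalgebra.counit (R := ℂ) (B i)
  mul_nonneg : ∀ i j k, 0 ≤ B.repr (B i * B j) k
  comul_nonneg : ∀ i j k,
    0 ≤ (B.tensorProduct B).repr (Coalgebra.comul (R := ℂ) (B i)) (j, k)
  antipode_nonneg : ∀ i j, 0 ≤ B.repr (HopfAlgebra.antipode (R := ℂ) (B i)) j

/-- The first part of the standard setup: a positive basis `B` of `H`, scaled so that
`1 = ∑_{g₊ ∈ G₊} d_{g₊}` with the `d_{g₊} ∈ B` distinct elements indexed by a finite
group `G₊`, whose span is the Hopf subalgebra `(ℂ G₊)*`. -/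
structure SetupPlus (H : Type*) [Ring H] [HopfAlgebra ℂ H] (ι : Type*) [Fintype ι]
    (Gp : Type*) [Group Gp] [Fintype Gp] where
  B : Module.Basis ι ℂ H
  pos : IsPositiveBasis B
  d : Gp → ι
  d_inj : Function.Injective d
  one_eq : (1 : H) = ∑ g : Gp, B (d g)
  d_mul_self : ∀ g : Gp, B (d g) * B (d g) = B (d g)
  d_mul_ne : ∀ g h : Gp, g ≠ h → B (d g) * B (d h) = 0
  d_comul : ∀ g : Gp, Coalgebra.comul (R := ℂ) (B (d g)) =
    ∑ h : Gp, B (d h) ⊗ₜ[ℂ] B (d (h⁻¹ * g))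
  d_antipode : ∀ g : Gp, HopfAlgebra.antipode (R := ℂ) (B (d g)) = B (d g⁻¹)
  d_counit_one : Coalgebra.counit (R := ℂ) (B (d 1)) = 1
  d_counit_ne : ∀ g : Gp, g ≠ 1 → Coalgebra.counit (R := ℂ) (B (d g)) = 0

/-- The full standard setup: in addition the basis is scaled so that
`ε = ∑_{b ∈ G₋} b*`, where `G₋ = {b ∈ B : ε(b) ≠ 0}` is closed under the
multiplication of `H` and forms a group (with identity `d_e`), whose elements are
`e_{g₋}` for `g₋` in a finite group `G₋`. -/
structure SetupFull (H : Type*) [Ring H] [HopfAlgebra ℂ H] (ι : Type*) [Fintype ι]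
    (Gp : Type*) [Group Gp] [Fintype Gp] (Gn : Type*) [Group Gn] [Fintype Gn] extends
    SetupPlus H ι Gp where
  en : Gn → ι
  en_inj : Function.Injective en
  en_range : ∀ i : ι, Coalgebra.counit (R := ℂ) (B i) ≠ 0 ↔ ∃ x : Gn, en x = i
  en_counit : ∀ x : Gn, Coalgebra.counit (R := ℂ) (B (en x)) = 1
  en_mul : ∀ x y : Gn, B (en x) * B (en y) = B (en (x * y))
  en_one : en 1 = d 1

section
variable {H : Type*} [Ring H] [HopfAlgebra ℂ H] {ι : Type*} [Fintype ι]
  {Gp : Type*} [Group Gp] [Fintype Gp] {Gn : Type*} [Group Gn] [Fintype Gn]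

/-- `α₊(b) = g₊`, i.e. `d_{g₊} b = b`. -/
def IsAlphaPlus (S : SetupPlus H ι Gp) (i : ι) (g : Gp) : Prop :=
  S.B (S.d g) * S.B i = S.B i

/-- `β₊(b) = g₊`, i.e. `b d_{g₊} = b`. -/
def IsBetaPlus (S : SetupPlus H ι Gp) (i : ι) (g : Gp) : Prop :=
  S.B i * S.B (S.d g) = S.B i

/-- `α₋(b) = g₋`: the only term of `Δ(b)` lying in `G₋ ⊗ B` is `e_{g₋} ⊗ b`,
and it has coefficient `1`. -/
def IsAlphaMinus (S : SetupFull H ι Gp Gn) (i : ι) (x : Gn) : Prop :=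
  (S.B.tensorProduct S.B).repr (Coalgebra.comul (R := ℂ) (S.B i)) (S.en x, i) = 1 ∧
  ∀ (y : Gn) (j : ι), ¬(y = x ∧ j = i) →
    (S.B.tensorProduct S.B).repr (Coalgebra.comul (R := ℂ) (S.B i)) (S.en y, j) = 0

/-- `β₋(b) = g₋`: the only term of `Δ(b)` lying in `B ⊗ G₋` is `b ⊗ e_{g₋}`,
and it has coefficient `1`. -/
def IsBetaMinus (S : SetupFull H ι Gp Gn) (i : ι) (x : Gn) : Prop :=
  (S.B.tensorProduct S.B).repr (Coalgebra.comul (R := ℂ) (S.B i)) (i, S.en x) = 1 ∧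
  ∀ (y : Gn) (j : ι), ¬(y = x ∧ j = i) →
    (S.B.tensorProduct S.B).repr (Coalgebra.comul (R := ℂ) (S.B i)) (j, S.en y) = 0

end

section Aux
open Coalgebra HopfAlgebra

variable {H : Type} [Ring H] [HopfAlgebra ℂ H] {ι : Type} [Fintype ι]
  {Gp : Type} [Group Gp] [Fintype Gp] {Gn : Type} [Group Gn] [Fintype Gn]

/-- Abbreviation for the comultiplication coefficients. -/
private noncomputable def cc (S : SetupFull H ι Gp Gn) (b : ι) (p : ι × ι) : ℂ :=
  (S.B.tensorProduct S.B).repr (Coalgebra.comul (R := ℂ) (S.B b)) p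

private lemma cc_nonneg (S : SetupFull H ι Gp Gn) (b : ι) (p : ι × ι) : 0 ≤ cc S b p :=
  S.pos.comul_nonneg b p.1 p.2

private lemma comul_expand (S : SetupFull H ι Gp Gn) (b : ι) :
    Coalgebra.comul (R := ℂ) (S.B b) =
      ∑ p : ι × ι, cc S b p • (S.B p.1 ⊗ₜ[ℂ] S.B p.2) := by
  conv_lhs => rw [← (S.B.tensorProduct S.B).sum_repr (Coalgebra.comul (R := ℂ) (S.B b))]
  simp [cc, Module.Basis.tensorProduct_apply']

/-- If a finite sum of elements with nonneg coordinates (weighted by nonneg scalars) is zero,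
each term with nonzero weight vanishes. -/
private lemma smul_sum_zero {α : Type} [Fintype α] (S : SetupFull H ι Gp Gn)
    (w : α → ℂ) (x : α → H) (hw : ∀ t, 0 ≤ w t) (hx : ∀ t m, 0 ≤ S.B.repr (x t) m)
    (hsum : ∑ t : α, w t • x t = 0) {t₀ : α} (ht₀ : w t₀ ≠ 0) : x t₀ = 0 := by
  have key : ∀ m, S.B.repr (x t₀) m = 0 := by
    intro m
    have h : ∑ t : α, w t * S.B.repr (x t) m = 0 := by
      have := congrArg (fun z => S.B.repr z m) hsum
      simpa using this
    have h2 := (Finset.sum_eq_zero_iff_of_nonneg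
      (fun t _ => mul_nonneg (hw t) (hx t m))).mp h t₀ (Finset.mem_univ _)
    exact (mul_eq_zero.mp h2).resolve_left ht₀
  have : S.B.repr (x t₀) = 0 := Finsupp.ext (by simpa using key)
  exact (LinearEquiv.map_eq_zero_iff S.B.repr).mp this

private lemma antipode_mul_repr_nonneg (S : SetupFull H ι Gp Gn) (j k m : ι) :
    0 ≤ S.B.repr (HopfAlgebra.antipode (R := ℂ) (S.B j) * S.B k) m := by
  rw [show HopfAlgebra.antipode (R := ℂ) (S.B j)
      = ∑ p : ι, S.B.repr (HopfAlgebra.antipode (R := ℂ) (S.B j)) p • S.B p from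
    (S.B.sum_repr _).symm]
  rw [Finset.sum_mul]
  simp only [smul_mul_assoc, map_sum, map_smul, Finsupp.coe_finset_sum, Finset.sum_apply,
    Finsupp.smul_apply, smul_eq_mul]
  exact Finset.sum_nonneg fun p _ =>
    mul_nonneg (S.pos.antipode_nonneg j p) (S.pos.mul_nonneg p k m)

private lemma mul_antipode_repr_nonneg (S : SetupFull H ι Gp Gn) (j k m : ι) :
    0 ≤ S.B.repr (S.B j * HopfAlgebra.antipode (R := ℂ) (S.B k)) m := by
  rw [show HopfAlgebra.antipode (R := ℂ) (S.B k)
      = ∑ p : ι, S.B.repr (HopfAlgebra.antipode (R := ℂ) (S.B k)) p • S.B p from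
    (S.B.sum_repr _).symm]
  rw [Finset.mul_sum]
  simp only [mul_smul_comm, map_sum, map_smul, Finsupp.coe_finset_sum, Finset.sum_apply,
    Finsupp.smul_apply, smul_eq_mul]
  exact Finset.sum_nonneg fun p _ =>
    mul_nonneg (S.pos.antipode_nonneg k p) (S.pos.mul_nonneg j p m)

private lemma antipode_sum_r (S : SetupFull H ι Gp Gn) (b : ι) :
    ∑ p : ι × ι, cc S b p • (HopfAlgebra.antipode (R := ℂ) (S.B p.1) * S.B p.2)
      = Coalgebra.counit (R := ℂ) (S.B b) • (1 : H) := by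
  have h := HopfAlgebra.mul_antipode_rTensor_comul_apply (R := ℂ) (S.B b)
  rw [comul_expand] at h
  simpa [map_sum, Algebra.algebraMap_eq_smul_one] using h

private lemma antipode_sum_l (S : SetupFull H ι Gp Gn) (b : ι) :
    ∑ p : ι × ι, cc S b p • (S.B p.1 * HopfAlgebra.antipode (R := ℂ) (S.B p.2))
      = Coalgebra.counit (R := ℂ) (S.B b) • (1 : H) := by
  have h := HopfAlgebra.mul_antipode_lTensor_comul_apply (R := ℂ) (S.B b)
  rw [comul_expand] at h
  simpa [map_sum, Algebra.algebraMap_eq_smul_one] using h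

private lemma expand_left (S : SetupFull H ι Gp Gn) (b : ι) :
    S.B b = ∑ p : ι × ι, cc S b p • (Coalgebra.counit (R := ℂ) (S.B p.1) • S.B p.2) := by
  have h1 : (TensorProduct.lid ℂ H) ((Coalgebra.counit (R := ℂ)).rTensor H
      (Coalgebra.comul (R := ℂ) (S.B b))) = S.B b := by
    rw [Coalgebra.rTensor_counit_comul]; simp
  rw [comul_expand] at h1
  rw [← h1]
  simp [map_sum]

private lemma expand_right (S : SetupFull H ι Gp Gn) (b : ι) :
    S.B b = ∑ p : ι × ι, cc S b p • (Coalgebra.counit (R := ℂ) (S.B p.2) • S.B p.1) := by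
  have h1 : (TensorProduct.rid ℂ H) ((Coalgebra.counit (R := ℂ)).lTensor H
      (Coalgebra.comul (R := ℂ) (S.B b))) = S.B b := by
    rw [Coalgebra.lTensor_counit_comul]; simp
  rw [comul_expand] at h1
  rw [← h1]
  simp [map_sum]

private lemma exists_left (S : SetupFull H ι Gp Gn) (b : ι) :
    ∃ y : Gn, cc S b (S.en y, b) ≠ 0 := by
  classical
  have h1 := expand_left S b
  have h3 := congrArg (fun x => S.B.repr x b) h1
  simp only [map_sum, map_smul, Module.Basis.repr_self, Finsupp.coe_finset_sum, Finset.sum_apply,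
    Finsupp.smul_apply, Finsupp.single_apply, smul_eq_mul] at h3
  have hne : ∑ p : ι × ι, cc S b p * (Coalgebra.counit (R := ℂ) (S.B p.1)
      * (if p.2 = b then (1:ℂ) else 0)) ≠ 0 := by
    rw [← h3]; simp
  obtain ⟨p, -, hp⟩ := Finset.exists_ne_zero_of_sum_ne_zero hne
  have hcp : cc S b p ≠ 0 := fun h => hp (by simp [h])
  have hε : Coalgebra.counit (R := ℂ) (S.B p.1) ≠ 0 := fun h => hp (by simp [h])
  have hp2 : p.2 = b := by
    by_contra hc; exact hp (by simp [hc])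
  obtain ⟨y, hy⟩ := (S.en_range p.1).mp hε
  exact ⟨y, by rw [show ((S.en y, b) : ι × ι) = p from by rw [hy, ← hp2]]; exact hcp⟩

private lemma exists_right (S : SetupFull H ι Gp Gn) (b : ι) :
    ∃ y : Gn, cc S b (b, S.en y) ≠ 0 := by
  classical
  have h1 := expand_right S b
  have h3 := congrArg (fun x => S.B.repr x b) h1
  simp only [map_sum, map_smul, Module.Basis.repr_self, Finsupp.coe_finset_sum, Finset.sum_apply,
    Finsupp.smul_apply, Finsupp.single_apply, smul_eq_mul] at h3
  have hne : ∑ p : ι × ι, cc S b p * (Coalgebra.counit (R := ℂ) (S.B p.2)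
      * (if p.1 = b then (1:ℂ) else 0)) ≠ 0 := by
    rw [← h3]; simp
  obtain ⟨p, -, hp⟩ := Finset.exists_ne_zero_of_sum_ne_zero hne
  have hcp : cc S b p ≠ 0 := fun h => hp (by simp [h])
  have hε : Coalgebra.counit (R := ℂ) (S.B p.2) ≠ 0 := fun h => hp (by simp [h])
  have hp1 : p.1 = b := by
    by_contra hc; exact hp (by simp [hc])
  obtain ⟨y, hy⟩ := (S.en_range p.2).mp hε
  exact ⟨y, by rw [show ((b, S.en y) : ι × ι) = p from by rw [hy, ← hp1]]; exact hcp⟩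

private lemma counit_antipode (S : SetupFull H ι Gp Gn) (b : ι) :
    Coalgebra.counit (R := ℂ) (HopfAlgebra.antipode (R := ℂ) (S.B b))
      = Coalgebra.counit (R := ℂ) (S.B b) := by
  have h1 := congrArg (fun x => Coalgebra.counit (R := ℂ)
    (HopfAlgebra.antipode (R := ℂ) x)) (expand_right S b)
  simp only [map_sum, map_smul, smul_eq_mul] at h1
  have h2 := congrArg (Coalgebra.counit (R := ℂ)) (antipode_sum_r S b)
  simp only [map_sum, map_smul, Bialgebra.counit_mul, Bialgebra.counit_one,
    smul_eq_mul, mul_one] at h2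
  rw [h1, ← h2]
  exact Finset.sum_congr rfl fun p _ => by ring

private lemma exists_repr_antipode (S : SetupFull H ι Gp Gn) (y₀ : Gn) :
    ∃ y' : Gn, S.B.repr (HopfAlgebra.antipode (R := ℂ) (S.B (S.en y₀))) (S.en y') ≠ 0 := by
  have h1 : Coalgebra.counit (R := ℂ) (HopfAlgebra.antipode (R := ℂ) (S.B (S.en y₀))) = 1 := by
    rw [_root_.counit_antipode, S.en_counit]
  have h2 : ∑ j : ι, S.B.repr (HopfAlgebra.antipode (R := ℂ) (S.B (S.en y₀))) j
      * Coalgebra.counit (R := ℂ) (S.B j) = 1 := by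
    conv_rhs => rw [← h1]
    conv_rhs => rw [show HopfAlgebra.antipode (R := ℂ) (S.B (S.en y₀))
        = ∑ p : ι, S.B.repr (HopfAlgebra.antipode (R := ℂ) (S.B (S.en y₀))) p • S.B p from
      (S.B.sum_repr _).symm]
    rw [map_sum]; simp only [map_smul, smul_eq_mul]
  obtain ⟨j, -, hj⟩ := Finset.exists_ne_zero_of_sum_ne_zero (h2 ▸ one_ne_zero)
  have ha : S.B.repr (HopfAlgebra.antipode (R := ℂ) (S.B (S.en y₀))) j ≠ 0 :=
    fun h => hj (by simp [h])
  have hε : Coalgebra.counit (R := ℂ) (S.B j) ≠ 0 := fun h => hj (by simp [h])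
  obtain ⟨y', hy'⟩ := (S.en_range j).mp hε
  exact ⟨y', hy' ▸ ha⟩

private lemma mul_right_zero (S : SetupFull H ι Gp Gn) {j b : ι}
    (h : HopfAlgebra.antipode (R := ℂ) (S.B j) * S.B b = 0) {j' : ι}
    (hj' : S.B.repr (HopfAlgebra.antipode (R := ℂ) (S.B j)) j' ≠ 0) :
    S.B j' * S.B b = 0 := by
  refine smul_sum_zero S (fun p => S.B.repr (HopfAlgebra.antipode (R := ℂ) (S.B j)) p)
    (fun p => S.B p * S.B b) (fun p => S.pos.antipode_nonneg j p)
    (fun p m => S.pos.mul_nonneg p b m) ?_ hj'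
  rw [show ∑ p : ι, S.B.repr (HopfAlgebra.antipode (R := ℂ) (S.B j)) p • (S.B p * S.B b)
      = (∑ p : ι, S.B.repr (HopfAlgebra.antipode (R := ℂ) (S.B j)) p • S.B p) * S.B b by
    rw [Finset.sum_mul]; simp [smul_mul_assoc]]
  rw [S.B.sum_repr]; exact h

private lemma mul_left_zero (S : SetupFull H ι Gp Gn) {j b : ι}
    (h : S.B b * HopfAlgebra.antipode (R := ℂ) (S.B j) = 0) {j' : ι}
    (hj' : S.B.repr (HopfAlgebra.antipode (R := ℂ) (S.B j)) j' ≠ 0) :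
    S.B b * S.B j' = 0 := by
  refine smul_sum_zero S (fun p => S.B.repr (HopfAlgebra.antipode (R := ℂ) (S.B j)) p)
    (fun p => S.B b * S.B p) (fun p => S.pos.antipode_nonneg j p)
    (fun p m => S.pos.mul_nonneg b p m) ?_ hj'
  rw [show ∑ p : ι, S.B.repr (HopfAlgebra.antipode (R := ℂ) (S.B j)) p • (S.B b * S.B p)
      = S.B b * (∑ p : ι, S.B.repr (HopfAlgebra.antipode (R := ℂ) (S.B j)) p • S.B p) by
    rw [Finset.mul_sum]; simp [mul_smul_comm]]
  rw [S.B.sum_repr]; exact h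

private lemma alpha_counit (S : SetupFull H ι Gp Gn) (b : ι)
    (h : S.B (S.d 1) * S.B b = S.B b) : Coalgebra.counit (R := ℂ) (S.B b) ≠ 0 := by
  intro hz
  obtain ⟨y₀, hy₀⟩ := exists_left S b
  have hzero : HopfAlgebra.antipode (R := ℂ) (S.B (S.en y₀)) * S.B b = 0 := by
    refine smul_sum_zero S (cc S b)
      (fun p => HopfAlgebra.antipode (R := ℂ) (S.B p.1) * S.B p.2)
      (cc_nonneg S b) (fun p m => antipode_mul_repr_nonneg S p.1 p.2 m) ?_
      (t₀ := (S.en y₀, b)) hy₀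
    rw [antipode_sum_r, hz, zero_smul]
  obtain ⟨y', hy'⟩ := exists_repr_antipode S y₀
  have h0 : S.B (S.en y') * S.B b = 0 := mul_right_zero S hzero hy'
  have hb0 : S.B b = 0 := by
    calc S.B b = S.B (S.d 1) * S.B b := h.symm
    _ = S.B (S.en (y'⁻¹ * y')) * S.B b := by rw [inv_mul_cancel, S.en_one]
    _ = (S.B (S.en y'⁻¹) * S.B (S.en y')) * S.B b := by rw [S.en_mul]
    _ = S.B (S.en y'⁻¹) * (S.B (S.en y') * S.B b) := by rw [mul_assoc]
    _ = 0 := by rw [h0, mul_zero]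
  exact S.B.ne_zero b hb0

private lemma beta_counit (S : SetupFull H ι Gp Gn) (b : ι)
    (h : S.B b * S.B (S.d 1) = S.B b) : Coalgebra.counit (R := ℂ) (S.B b) ≠ 0 := by
  intro hz
  obtain ⟨y₀, hy₀⟩ := exists_right S b
  have hzero : S.B b * HopfAlgebra.antipode (R := ℂ) (S.B (S.en y₀)) = 0 := by
    refine smul_sum_zero S (cc S b)
      (fun p => S.B p.1 * HopfAlgebra.antipode (R := ℂ) (S.B p.2))
      (cc_nonneg S b) (fun p m => mul_antipode_repr_nonneg S p.1 p.2 m) ?_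
      (t₀ := (b, S.en y₀)) hy₀
    rw [antipode_sum_l, hz, zero_smul]
  obtain ⟨y', hy'⟩ := exists_repr_antipode S y₀
  have h0 : S.B b * S.B (S.en y') = 0 := mul_left_zero S hzero hy'
  have hb0 : S.B b = 0 := by
    calc S.B b = S.B b * S.B (S.d 1) := h.symm
    _ = S.B b * S.B (S.en (y' * y'⁻¹)) := by rw [mul_inv_cancel, S.en_one]
    _ = S.B b * (S.B (S.en y') * S.B (S.en y'⁻¹)) := by rw [S.en_mul]
    _ = (S.B b * S.B (S.en y')) * S.B (S.en y'⁻¹) := by rw [mul_assoc]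
    _ = 0 := by rw [h0, zero_mul]
  exact S.B.ne_zero b hb0

end Aux

theorem stmt10 {H : Type} [Ring H] [HopfAlgebra ℂ H] {ι : Type} [Fintype ι]
    {Gp : Type} [Group Gp] [Fintype Gp] {Gn : Type} [Group Gn] [Fintype Gn]
    (S : SetupFull H ι Gp Gn) :
    -- (1) α₊(b) = e, (2) β₊(b) = e and (3) b ∈ G₋ (i.e. ε(b) ≠ 0) are equivalent
    (∀ b : ι,
      (IsAlphaPlus S.toSetupPlus b 1 ↔ Coalgebra.counit (R := ℂ) (S.B b) ≠ 0) ∧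
      (IsBetaPlus S.toSetupPlus b 1 ↔ Coalgebra.counit (R := ℂ) (S.B b) ≠ 0) ∧
      (Coalgebra.counit (R := ℂ) (S.B b) ≠ 0 ↔ ∃ x : Gn, S.en x = b)) ∧
    -- in particular B_{e,g₊} = B_{g₊,e} = ∅ for g₊ ≠ e
    (∀ (b : ι) (g : Gp), g ≠ 1 →
      ¬(IsAlphaPlus S.toSetupPlus b 1 ∧ IsBetaPlus S.toSetupPlus b g) ∧
      ¬(IsAlphaPlus S.toSetupPlus b g ∧ IsBetaPlus S.toSetupPlus b 1)) := by
  have main : ∀ b : ι,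
      (IsAlphaPlus S.toSetupPlus b 1 ↔ Coalgebra.counit (R := ℂ) (S.B b) ≠ 0) ∧
      (IsBetaPlus S.toSetupPlus b 1 ↔ Coalgebra.counit (R := ℂ) (S.B b) ≠ 0) ∧
      (Coalgebra.counit (R := ℂ) (S.B b) ≠ 0 ↔ ∃ x : Gn, S.en x = b) := by
    intro b
    have h3 : (Coalgebra.counit (R := ℂ) (S.B b) ≠ 0 ↔ ∃ x : Gn, S.en x = b) := S.en_range b
    have halpha : IsAlphaPlus S.toSetupPlus b 1 ↔ Coalgebra.counit (R := ℂ) (S.B b) ≠ 0 := by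
      constructor
      · exact alpha_counit S b
      · intro hε
        obtain ⟨x, hx⟩ := h3.mp hε
        show S.B (S.d 1) * S.B b = S.B b
        rw [← hx, ← S.en_one, S.en_mul, one_mul]
    have hbeta : IsBetaPlus S.toSetupPlus b 1 ↔ Coalgebra.counit (R := ℂ) (S.B b) ≠ 0 := by
      constructor
      · exact beta_counit S b
      · intro hε
        obtain ⟨x, hx⟩ := h3.mp hε
        show S.B b * S.B (S.d 1) = S.B b
        rw [← hx, ← S.en_one, S.en_mul, mul_one]
    exact ⟨halpha, hbeta, h3⟩
  refine ⟨main, ?_⟩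
  intro b g hg
  constructor
  · rintro ⟨ha, hb⟩
    have hβ1 : IsBetaPlus S.toSetupPlus b 1 :=
      ((main b).2.1).mpr (((main b).1).mp ha)
    have hb0 : S.B b = 0 := by
      calc S.B b = S.B b * S.B (S.d 1) := hβ1.symm
      _ = (S.B b * S.B (S.d g)) * S.B (S.d 1) := by rw [hb]
      _ = S.B b * (S.B (S.d g) * S.B (S.d 1)) := by rw [mul_assoc]
      _ = 0 := by rw [S.d_mul_ne g 1 hg, mul_zero]
    exact S.B.ne_zero b hb0
  · rintro ⟨ha, hb⟩
    have hα1 : IsAlphaPlus S.toSetupPlus b 1 :=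
      ((main b).1).mpr (((main b).2.1).mp hb)
    have hb0 : S.B b = 0 := by
      calc S.B b = S.B (S.d 1) * S.B b := hα1.symm
      _ = S.B (S.d 1) * (S.B (S.d g) * S.B b) := by rw [ha]
      _ = (S.B (S.d 1) * S.B (S.d g)) * S.B b := by rw [mul_assoc]
      _ = 0 := by rw [S.d_mul_ne 1 g (Ne.symm hg), zero_mul]
    exact S.B.ne_zero b hb0
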